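/- Let n, d be integers with 1 ≤ d < n−1 and Γ ⊂ ℝⁿ a closed d-Ahlfors regular set with constant C₀, and let c ∈ (0,1) be the constant from the Harnack chain lemma. There is a constant C, depending only on d, n, C₀, with the following property. For every Λ ≥ 1, s > 0, and X₁, X₂ ∈ Ω with δ(X₁) ≥ s, δ(X₂) ≥ s and |X₁ − X₂| ≤ Λ s, setting τ = c Λ^{−d/(n−1−d)} s, there exist an integer N ≤ C Λ^{(n−1)/(n−1−d)}, points Z₁, …, Z_N ∈ ℝⁿ, and balls B₀ = B(X₁, s/2), B_j = B(Z_j, τ/4) for 1 ≤ j ≤ N, B_{N+1} = B(X₂, s/2), such that B_j ∩ B_{j+1} ≠ ∅ for all 0 ≤ j ≤ N, and for 1 ≤ j ≤ N one has dist(B_j, Γ) ≥ (3/4) τ and dist(B_j, Γ) < min{δ(X₁), δ(X₂)} + 3 Λ s. -/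

import Mathlib

open MeasureTheory Metric Set
open scoped ENNReal NNReal Topology

noncomputable section

abbrev Pt (n : ℕ) := EuclideanSpace ℝ (Fin n)

/-- A closed set `Γ ⊆ ℝⁿ` is `d`-Ahlfors regular with constant `C₀`. -/
def AhlforsRegular (n d : ℕ) (C₀ : ℝ) (Γ : Set (Pt n)) : Prop :=
  ∀ q ∈ Γ, ∀ r : ℝ, 0 < r →
    ENNReal.ofReal (C₀⁻¹ * r ^ d) ≤ μH[(d : ℝ)] (ball q r ∩ Γ) ∧
    μH[(d : ℝ)] (ball q r ∩ Γ) ≤ ENNReal.ofReal (C₀ * r ^ d)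

/-- The conclusion of the Harnack chain lemma for the constant `c`. -/
def HarnackChainProp (n d : ℕ) (Γ : Set (Pt n)) (c : ℝ) : Prop :=
  ∀ Λ s : ℝ, 1 ≤ Λ → 0 < s →
    ∀ X₁ X₂ : Pt n, X₁ ∉ Γ → X₂ ∉ Γ →
      s ≤ infDist X₁ Γ → s ≤ infDist X₂ Γ → dist X₁ X₂ ≤ Λ * s →
      ∃ Y₁ ∈ ball X₁ (s / 2), ∃ Y₂ ∈ ball X₂ (s / 2),
        ∀ Y ∈ segment ℝ Y₁ Y₂,
          c * Λ ^ (-(d : ℝ) / ((n : ℝ) - 1 - (d : ℝ))) * s ≤ infDist Y Γ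

set_option maxHeartbeats 800000 in
/-- Remark 2.4: given the Harnack chain lemma, two points `X₁, X₂` of `Ω` with `δ(Xᵢ) ≥ s`
and `|X₁ - X₂| ≤ Λ s` can be joined by a chain of at most `C Λ^{(n-1)/(n-1-d)}` balls
`B₀ = B(X₁, s/2)`, `B_j = B(Z_j, τ/4)` (`1 ≤ j ≤ N`), `B_{N+1} = B(X₂, s/2)` with
`τ = c Λ^{-d/(n-1-d)} s`, consecutive balls intersecting, and each intermediate ball at
distance at least `(3/4)τ` and less than `min{δ(X₁), δ(X₂)} + 3Λs` from `Γ`. -/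
theorem harnack_chain_of_balls (n d : ℕ) (C₀ c : ℝ)
    (hd : 1 ≤ d) (hdn : d + 1 < n) (hC₀ : 1 ≤ C₀) (hc : c ∈ Set.Ioo (0 : ℝ) 1) :
    ∃ C : ℝ, 0 < C ∧
      ∀ Γ : Set (Pt n), IsClosed Γ → Γ.Nonempty → AhlforsRegular n d C₀ Γ →
        HarnackChainProp n d Γ c →
        ∀ Λ s : ℝ, 1 ≤ Λ → 0 < s →
          ∀ X₁ X₂ : Pt n, X₁ ∉ Γ → X₂ ∉ Γ →
            s ≤ infDist X₁ Γ → s ≤ infDist X₂ Γ → dist X₁ X₂ ≤ Λ * s →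
            let τ : ℝ := c * Λ ^ (-(d : ℝ) / ((n : ℝ) - 1 - (d : ℝ))) * s
            ∃ N : ℕ, (N : ℝ) ≤ C * Λ ^ (((n : ℝ) - 1) / ((n : ℝ) - 1 - (d : ℝ))) ∧
              ∃ Z : ℕ → Pt n,
                let B : ℕ → Set (Pt n) := fun j =>
                  if j = 0 then ball X₁ (s / 2)
                  else if j = N + 1 then ball X₂ (s / 2)
                  else ball (Z j) (τ / 4)
                (∀ j ≤ N, (B j ∩ B (j + 1)).Nonempty) ∧
                (∀ j, 1 ≤ j → j ≤ N →
                  (∀ Y ∈ B j, 3 / 4 * τ ≤ infDist Y Γ) ∧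
                  (∃ Y ∈ B j,
                    infDist Y Γ < min (infDist X₁ Γ) (infDist X₂ Γ) + 3 * Λ * s)) := by
  obtain ⟨hc0, hc1⟩ := hc
  have he : (0:ℝ) < (n:ℝ) - 1 - (d:ℝ) := by
    have : (d:ℝ) + 2 ≤ (n:ℝ) := by exact_mod_cast hdn
    linarith
  refine ⟨8 / c + 2, by positivity, ?_⟩
  intro Γ hΓcl hΓne hreg hhc Λ s hΛ hs X₁ X₂ hX₁ hX₂ hδ₁ hδ₂ hdist
  intro τ
  have hΛpos : (0:ℝ) < Λ := lt_of_lt_of_le one_pos hΛ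
  have hBpos : (0:ℝ) < Λ ^ ((d:ℝ)/((n:ℝ)-1-(d:ℝ))) := Real.rpow_pos_of_pos hΛpos _
  have hτ_eq : τ = c * s / Λ ^ ((d:ℝ)/((n:ℝ)-1-(d:ℝ))) := by
    show c * Λ ^ (-(d:ℝ)/((n:ℝ)-1-(d:ℝ))) * s = _
    rw [neg_div, Real.rpow_neg hΛpos.le]
    ring
  have hτpos : 0 < τ := by rw [hτ_eq]; positivity
  obtain ⟨Y₁, hY₁, Y₂, hY₂, hseg⟩ := hhc Λ s hΛ hs X₁ X₂ hX₁ hX₂ hδ₁ hδ₂ hdist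
  set L : ℝ := dist Y₁ Y₂ with hL_def
  have hL0 : 0 ≤ L := dist_nonneg
  have hs' : s ≤ Λ * s := (le_mul_iff_one_le_left hs).mpr hΛ
  have hY₁' : dist Y₁ X₁ < s / 2 := mem_ball.mp hY₁
  have hY₂' : dist Y₂ X₂ < s / 2 := mem_ball.mp hY₂
  have hLlt : L < Λ * s + s := by
    calc L ≤ dist Y₁ X₁ + dist X₁ X₂ + dist X₂ Y₂ := dist_triangle4 _ _ _ _
    _ < s/2 + Λ*s + s/2 := by rw [dist_comm X₂ Y₂]; linarith
    _ = Λ*s + s := by ring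
  set K : ℕ := ⌈L / (τ/4)⌉₊ with hK_def
  have hLK : L ≤ (K:ℝ) * (τ/4) :=
    (div_le_iff₀ (by positivity : (0:ℝ) < τ/4)).mp (Nat.le_ceil _)
  have hKub : (K:ℝ) ≤ 4*L/τ + 1 := by
    have h : (K:ℝ) < L / (τ/4) + 1 := Nat.ceil_lt_add_one (by positivity)
    have h2 : L / (τ/4) = 4*L/τ := by field_simp
    linarith
  -- the interpolation points
  set t : ℕ → ℝ := fun j => (((min j (K+1) : ℕ) : ℝ) - 1) / (K:ℝ) with ht_def
  set Z : ℕ → Pt n := fun j => Y₁ + t j • (Y₂ - Y₁) with hZ_def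
  have htval : ∀ j, 1 ≤ j → j ≤ K+1 → t j = ((j:ℝ)-1)/(K:ℝ) := by
    intro j h1 h2
    simp only [ht_def, min_eq_left h2]
  have ht01 : ∀ j, 1 ≤ j → j ≤ K+1 → t j ∈ Icc (0:ℝ) 1 := by
    intro j h1 h2
    rw [htval j h1 h2]
    constructor
    · apply div_nonneg _ (Nat.cast_nonneg K)
      have : (1:ℝ) ≤ (j:ℝ) := by exact_mod_cast h1
      linarith
    · rcases Nat.eq_zero_or_pos K with hK0 | hKpos
      · have hj : j = 1 := by omega
        subst hj
        simp [hK0]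
      · rw [div_le_one (by exact_mod_cast hKpos)]
        have : (j:ℝ) ≤ (K:ℝ) + 1 := by exact_mod_cast h2
        linarith
  have hZseg : ∀ j, 1 ≤ j → j ≤ K+1 → Z j ∈ segment ℝ Y₁ Y₂ := by
    intro j h1 h2
    rw [segment_eq_image']
    exact ⟨t j, ht01 j h1 h2, rfl⟩
  have hdistgen : ∀ a b : ℝ, dist (Y₁ + a • (Y₂ - Y₁)) (Y₁ + b • (Y₂ - Y₁)) = |a - b| * L := by
    intro a b
    rw [dist_eq_norm]
    have hv : (Y₁ + a • (Y₂ - Y₁)) - (Y₁ + b • (Y₂ - Y₁)) = (a - b) • (Y₂ - Y₁) := by module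
    rw [hv, norm_smul, Real.norm_eq_abs, hL_def, dist_eq_norm, norm_sub_rev]
  have hZ1 : Z 1 = Y₁ := by
    have h := htval 1 le_rfl (Nat.le_add_left 1 K)
    simp only [Nat.cast_one] at h
    simp [hZ_def, h]
  have hZtop : Z (K+1) = Y₂ := by
    rcases Nat.eq_zero_or_pos K with hK0 | hKpos
    · have hceil : L / (τ/4) ≤ 0 := Nat.ceil_eq_zero.mp (by rw [← hK_def]; exact hK0)
      have h0 : (0:ℝ) ≤ L / (τ/4) := by positivity
      have hdiv : L / (τ/4) = 0 := le_antisymm hceil h0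
      have hLzero : L = 0 := by
        rcases div_eq_zero_iff.mp hdiv with h | h
        · exact h
        · exact absurd h (by positivity)
      have hYY : Y₂ = Y₁ := (dist_eq_zero.mp hLzero).symm
      rw [hK0]
      rw [hZ1, hYY]
    · have h := htval (K+1) (Nat.le_add_left 1 K) le_rfl
      have hKne : (K:ℝ) ≠ 0 := by exact_mod_cast hKpos.ne'
      have ht : t (K+1) = 1 := by
        rw [h]; push_cast; field_simp; ring
      simp [hZ_def, ht]
  have hZlow : ∀ j, 1 ≤ j → j ≤ K+1 → τ ≤ infDist (Z j) Γ := by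
    intro j h1 h2
    exact hseg _ (hZseg j h1 h2)
  have hZY₁ : ∀ j, 1 ≤ j → j ≤ K+1 → dist (Z j) Y₁ ≤ L := by
    intro j h1 h2
    obtain ⟨ht0, ht1⟩ := ht01 j h1 h2
    have heq : dist (Z j) Y₁ = |t j - 0| * L := by
      have h := hdistgen (t j) 0
      rw [zero_smul, add_zero] at h
      simp only [hZ_def]
      exact h
    rw [heq, sub_zero, abs_of_nonneg ht0]
    nlinarith
  have hZY₂ : ∀ j, 1 ≤ j → j ≤ K+1 → dist (Z j) Y₂ ≤ L := by
    intro j h1 h2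
    obtain ⟨ht0, ht1⟩ := ht01 j h1 h2
    have heq : dist (Z j) Y₂ = |t j - 1| * L := by
      have h := hdistgen (t j) 1
      rw [one_smul, add_sub_cancel] at h
      simp only [hZ_def]
      exact h
    rw [heq, abs_sub_comm, abs_of_nonneg (by linarith)]
    nlinarith
  refine ⟨K+1, ?_, Z, ?_, ?_⟩
  · -- cardinality bound
    have hAeq : ((n:ℝ)-1)/((n:ℝ)-1-(d:ℝ)) = 1 + (d:ℝ)/((n:ℝ)-1-(d:ℝ)) := by
      field_simp; ring
    have hΛA : Λ ^ (((n:ℝ)-1)/((n:ℝ)-1-(d:ℝ))) = Λ * Λ ^ ((d:ℝ)/((n:ℝ)-1-(d:ℝ))) := by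
      rw [hAeq, Real.rpow_add hΛpos, Real.rpow_one]
    have hone_le : 1 ≤ Λ ^ (((n:ℝ)-1)/((n:ℝ)-1-(d:ℝ))) := by
      have hd1 : (1:ℝ) ≤ (d:ℝ) := by exact_mod_cast hd
      have h0 : (0:ℝ) ≤ ((n:ℝ)-1)/((n:ℝ)-1-(d:ℝ)) := div_nonneg (by linarith) he.le
      calc (1:ℝ) = Λ ^ (0:ℝ) := (Real.rpow_zero Λ).symm
      _ ≤ _ := Real.rpow_le_rpow_of_exponent_le hΛ h0
    have hLle : L ≤ 2*(Λ*s) := by linarith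
    have h2 : 4*L/τ ≤ (8/c) * Λ ^ (((n:ℝ)-1)/((n:ℝ)-1-(d:ℝ))) := by
      rw [hΛA]
      have hstep : 4*L/τ ≤ 4*(2*(Λ*s))/τ := by gcongr
      have heq : 4*(2*(Λ*s))/τ = (8/c)*(Λ * Λ ^ ((d:ℝ)/((n:ℝ)-1-(d:ℝ)))) := by
        rw [hτ_eq]; field_simp; ring
      linarith
    push_cast
    nlinarith
  · -- consecutive balls intersect
    intro j hj
    rcases Nat.eq_zero_or_pos j with hj0 | hj1
    · subst hj0
      have h1ne : (1:ℕ) ≠ K + 1 + 1 := by omega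
      simp only [if_pos rfl, if_neg (one_ne_zero), if_neg h1ne]
      exact ⟨Y₁, hY₁, by rw [hZ1]; exact mem_ball_self (by positivity)⟩
    · rcases eq_or_lt_of_le hj with hjtop | hjlt
      · subst hjtop
        have h1 : K + 1 ≠ 0 := by omega
        have h2 : K + 1 ≠ K + 1 + 1 := by omega
        simp only [if_neg h1, if_neg h2, if_neg (by omega : K + 1 + 1 ≠ 0),
          eq_self_iff_true, if_true]
        exact ⟨Y₂, by rw [hZtop]; exact mem_ball_self (by positivity), hY₂⟩
      · -- 1 ≤ j ≤ K
        have hjK : j ≤ K := by omega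
        have hKpos : 1 ≤ K := le_trans hj1 hjK
        have hKne : (K:ℝ) ≠ 0 := by
          have : (0:ℝ) < (K:ℝ) := by exact_mod_cast hKpos
          exact this.ne'
        have hjne0 : j ≠ 0 := by omega
        have hjneN : j ≠ K + 1 + 1 := by omega
        have hj1ne0 : j + 1 ≠ 0 := by omega
        have hj1neN : j + 1 ≠ K + 1 + 1 := by omega
        simp only [if_neg hjne0, if_neg hjneN, if_neg hj1ne0, if_neg hj1neN]
        set M : Pt n := Y₁ + ((t j + t (j+1))/2) • (Y₂ - Y₁) with hM_def
        have htj : t j = ((j:ℝ)-1)/(K:ℝ) := htval j hj1 (by omega)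
        have htj1 : t (j+1) = ((j:ℝ)+1-1)/(K:ℝ) := by
          have := htval (j+1) (by omega) (by omega)
          rw [this]; push_cast; ring_nf
        have hdiff : t (j+1) - t j = 1/(K:ℝ) := by
          rw [htj, htj1]; field_simp; ring
        have hLdK : L / (K:ℝ) ≤ τ/4 := by
          rw [div_le_iff₀ (by positivity : (0:ℝ) < (K:ℝ))]
          linarith [hLK]
        have hMj : dist M (Z j) < τ/4 := by
          simp only [hM_def, hZ_def]
          rw [hdistgen]
          have : |(t j + t (j+1))/2 - t j| = 1/(2*(K:ℝ)) := by
            rw [abs_of_nonneg]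
            · rw [show (t j + t (j+1))/2 - t j = (t (j+1) - t j)/2 by ring, hdiff]; ring
            · rw [show (t j + t (j+1))/2 - t j = (t (j+1) - t j)/2 by ring, hdiff]; positivity
          rw [this]
          have h1 : 1/(2*(K:ℝ)) * L = (L/(K:ℝ))/2 := by ring
          rw [h1]
          linarith
        have hMj1 : dist M (Z (j+1)) < τ/4 := by
          simp only [hM_def, hZ_def]
          rw [hdistgen]
          have : |(t j + t (j+1))/2 - t (j+1)| = 1/(2*(K:ℝ)) := by
            rw [abs_of_nonpos]
            · rw [show -((t j + t (j+1))/2 - t (j+1)) = (t (j+1) - t j)/2 by ring, hdiff]; ring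
            · rw [show (t j + t (j+1))/2 - t (j+1) = -((t (j+1) - t j)/2) by ring, hdiff]
              simp only [neg_nonpos]
              positivity
          rw [this]
          have h1 : 1/(2*(K:ℝ)) * L = (L/(K:ℝ))/2 := by ring
          rw [h1]
          linarith
        exact ⟨M, mem_ball.mpr hMj, mem_ball.mpr hMj1⟩
  · -- distance bounds for intermediate balls
    intro j hj1 hjN
    have hjne0 : j ≠ 0 := by omega
    have hjneN : j ≠ K + 1 + 1 := by omega
    simp only [if_neg hjne0, if_neg hjneN]
    constructor
    · intro Y hY
      have hlow := hZlow j hj1 hjN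
      have h1 : infDist (Z j) Γ ≤ infDist Y Γ + dist (Z j) Y := infDist_le_infDist_add_dist
      have h2 : dist (Z j) Y < τ/4 := by rw [dist_comm]; exact mem_ball.mp hY
      linarith
    · refine ⟨Z j, mem_ball_self (by positivity), ?_⟩
      have h1 : infDist (Z j) Γ ≤ infDist X₁ Γ + dist (Z j) X₁ := infDist_le_infDist_add_dist
      have h2 : infDist (Z j) Γ ≤ infDist X₂ Γ + dist (Z j) X₂ := infDist_le_infDist_add_dist
      have hx1 : dist (Z j) X₁ ≤ dist (Z j) Y₁ + dist Y₁ X₁ := dist_triangle _ _ _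
      have hx2 : dist (Z j) X₂ ≤ dist (Z j) Y₂ + dist Y₂ X₂ := dist_triangle _ _ _
      have hy1 := hZY₁ j hj1 hjN
      have hy2 := hZY₂ j hj1 hjN
      have hΛs : 0 < Λ * s := by positivity
      rcases le_total (infDist X₁ Γ) (infDist X₂ Γ) with h | h
      · rw [min_eq_left h]; linarith
      · rw [min_eq_right h]; linarith
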